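/- Continuity of the distribution function of Gaussian quadratic forms: Let M ∈ ℕ, let Y = (Y_1, …, Y_M)' be a vector of independent standard normal real random variables, let Γ be a symmetric real M×M matrix and c ∈ ℝ, and set Z = c + Y'ΓY = c + Σ_{k,l=1}^M Γ_{kl} Y_k Y_l. If Var(Z) > 0, then the law of Z has no atoms, i.e., P(Z = x) = 0 for every x ∈ ℝ (equivalently, the cumulative distribution function of Z is continuous). -/

import Mathlib

open MeasureTheory ProbabilityTheory

/-- Master slicing lemma: if `W` is independent of a standard Gaussian `X`, and for
almost every value `w` of `W` the slice `{t | F w t = 0}` is finite, then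
`F (W ω) (X ω) = 0` with probability zero. -/
lemma gqf_master_null {Ω : Type*} [MeasureSpace Ω] [IsProbabilityMeasure (ℙ : Measure Ω)]
    {α : Type*} [MeasurableSpace α]
    (X : Ω → ℝ) (W : Ω → α) (hX : Measurable X) (hW : Measurable W)
    (hindep : IndepFun W X ℙ)
    (hXlaw : Measure.map X ℙ = gaussianReal 0 1)
    (F : α → ℝ → ℝ) (hF : Measurable (Function.uncurry F))
    (hfin : ∀ᵐ w ∂(Measure.map W ℙ), {t : ℝ | F w t = 0}.Finite) :
    ℙ {ω | F (W ω) (X ω) = 0} = 0 := by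
  have hs : MeasurableSet {p : α × ℝ | F p.1 p.2 = 0} := hF (measurableSet_singleton 0)
  have hmap : Measure.map (fun ω => (W ω, X ω)) ℙ = (Measure.map W ℙ).prod (Measure.map X ℙ) :=
    (indepFun_iff_map_prod_eq_prod_map_map hW.aemeasurable hX.aemeasurable).mp hindep
  have h1 : ℙ {ω | F (W ω) (X ω) = 0}
      = ((Measure.map W ℙ).prod (Measure.map X ℙ)) {p : α × ℝ | F p.1 p.2 = 0} := by
    rw [← hmap, Measure.map_apply (hW.prodMk hX) hs]
    rfl
  rw [h1, Measure.measure_prod_null hs]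
  filter_upwards [hfin] with w hw
  have h2 : Prod.mk w ⁻¹' {p : α × ℝ | F p.1 p.2 = 0} = {t | F w t = 0} := rfl
  simp only [Pi.zero_apply]
  rw [h2, hXlaw]
  exact (gaussianReal_absolutelyContinuous 0 one_ne_zero) (hw.measure_zero volume)

/-- A nontrivial affine function of independent standard Gaussians vanishes with
probability zero. -/
lemma gqf_affine_null {Ω : Type*} [MeasureSpace Ω] [IsProbabilityMeasure (ℙ : Measure Ω)]
    (M : ℕ) (Y : Fin M → Ω → ℝ) (hYmeas : ∀ k, Measurable (Y k))
    (hYindep : iIndepFun Y ℙ)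
    (hYdist : ∀ k, Measure.map (Y k) ℙ = gaussianReal 0 1)
    (c : Fin M → ℝ) (d : ℝ) (l0 : Fin M) (hc : c l0 ≠ 0) :
    ℙ {ω | ∑ l, c l * Y l ω + d = 0} = 0 := by
  classical
  set T : Finset (Fin M) := {l0}ᶜ with hT
  set W : Ω → (T → ℝ) := fun ω i => Y i ω with hWdef
  have hW : Measurable W := measurable_pi_lambda _ (fun i => hYmeas i)
  have hindep : IndepFun W (Y l0) ℙ := by
    have h := (hYindep.indepFun_finset T {l0} disjoint_compl_left hYmeas).comp
      measurable_id
      (measurable_pi_apply (⟨l0, Finset.mem_singleton_self l0⟩ : ({l0} : Finset (Fin M))))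
    exact h
  set F : (T → ℝ) → ℝ → ℝ := fun w t => c l0 * t + (∑ i : T, c i * w i + d) with hFdef
  have hF : Measurable (Function.uncurry F) := by
    apply Measurable.add
    · exact (measurable_snd.const_mul _)
    · apply Measurable.add _ measurable_const
      exact Finset.measurable_sum Finset.univ
        (fun i _ => ((measurable_pi_apply i).comp measurable_fst).const_mul _)
  have hfin : ∀ᵐ w ∂(Measure.map W ℙ), {t : ℝ | F w t = 0}.Finite := by
    refine Filter.Eventually.of_forall (fun w => ?_)
    refine Set.Finite.subset (Set.finite_singleton (-(∑ i : T, c i * w i + d) / c l0)) ?_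
    intro t ht
    have ht' : c l0 * t + (∑ i : T, c i * w i + d) = 0 := ht
    have : t = -(∑ i : T, c i * w i + d) / c l0 := by
      rw [eq_div_iff hc]
      linarith
    simpa using this
  have hkey := gqf_master_null (Y l0) W (hYmeas l0) hW hindep (hYdist l0) F hF hfin
  have hsets : {ω | ∑ l, c l * Y l ω + d = 0} = {ω | F (W ω) (Y l0 ω) = 0} := by
    ext ω
    simp only [Set.mem_setOf_eq, hFdef]
    have hsum : ∑ l, c l * Y l ω = c l0 * Y l0 ω + ∑ l ∈ T, c l * Y l ω := by
      rw [hT, Finset.compl_singleton,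
        ← Finset.add_sum_erase Finset.univ (fun l => c l * Y l ω) (Finset.mem_univ l0)]
    have hcoe : (∑ i : T, c i * W ω i) = ∑ l ∈ T, c l * Y l ω := by
      rw [hWdef]
      exact Finset.sum_coe_sort T (fun l => c l * Y l ω)
    rw [hsum, hcoe]
    constructor <;> intro h <;> linarith
  rw [hsets]
  exact hkey

/-- Splitting a quadratic form at the coordinate `k0`. -/
lemma gqf_quad_split (M : ℕ) (Γ : Matrix (Fin M) (Fin M) ℝ) (k0 : Fin M) (y : Fin M → ℝ) :
    ∑ k, ∑ l, Γ k l * y k * y l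
      = Γ k0 k0 * (y k0) ^ 2
        + (∑ l ∈ ({k0}ᶜ : Finset (Fin M)), (Γ k0 l + Γ l k0) * y l) * y k0
        + ∑ k ∈ ({k0}ᶜ : Finset (Fin M)), ∑ l ∈ ({k0}ᶜ : Finset (Fin M)), Γ k l * y k * y l := by
  classical
  have h1 : ∀ f : Fin M → ℝ, ∑ k, f k = f k0 + ∑ k ∈ ({k0}ᶜ : Finset (Fin M)), f k := by
    intro f
    rw [Finset.compl_singleton,
      ← Finset.add_sum_erase Finset.univ f (Finset.mem_univ k0)]
  rw [h1 (fun k => ∑ l, Γ k l * y k * y l)]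
  rw [h1 (fun l => Γ k0 l * y k0 * y l)]
  have h2 : ∑ k ∈ ({k0}ᶜ : Finset (Fin M)), ∑ l, Γ k l * y k * y l
      = ∑ k ∈ ({k0}ᶜ : Finset (Fin M)),
          (Γ k k0 * y k * y k0 + ∑ l ∈ ({k0}ᶜ : Finset (Fin M)), Γ k l * y k * y l) :=
    Finset.sum_congr rfl (fun k _ => h1 (fun l => Γ k l * y k * y l))
  rw [h2, Finset.sum_add_distrib]
  have h3 : (∑ l ∈ ({k0}ᶜ : Finset (Fin M)), (Γ k0 l + Γ l k0) * y l) * y k0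
      = ∑ l ∈ ({k0}ᶜ : Finset (Fin M)), Γ k0 l * y k0 * y l
        + ∑ l ∈ ({k0}ᶜ : Finset (Fin M)), Γ l k0 * y l * y k0 := by
    rw [Finset.sum_mul, ← Finset.sum_add_distrib]
    exact Finset.sum_congr rfl (fun l _ => by ring)
  rw [h3]
  ring

/-- Continuity of the distribution function of Gaussian quadratic forms: if
`Z = c + Y'ΓY` with `Y` a standard Gaussian vector and `Γ` symmetric, and
`Var(Z) > 0`, then the law of `Z` has no atoms. -/
theorem gaussian_quadratic_form_no_atoms
    {Ω : Type*} [MeasureSpace Ω] [IsProbabilityMeasure (ℙ : Measure Ω)]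
    (M : ℕ) (Y : Fin M → Ω → ℝ) (hYmeas : ∀ k, Measurable (Y k))
    (hYindep : iIndepFun Y ℙ)
    (hYdist : ∀ k, Measure.map (Y k) ℙ = gaussianReal 0 1)
    (Γ : Matrix (Fin M) (Fin M) ℝ) (hΓ : Γ.IsSymm) (c : ℝ)
    (Z : Ω → ℝ) (hZ : ∀ ω, Z ω = c + ∑ k, ∑ l, Γ k l * Y k ω * Y l ω)
    (hvar : 0 < variance Z ℙ) :
    ∀ x : ℝ, ℙ {ω | Z ω = x} = 0 := by
  classical
  -- Γ is not identically zero
  have hΓne : ∃ k0 l0, Γ k0 l0 ≠ 0 := by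
    by_contra h
    push_neg at h
    have hZc : Z = fun _ => c := by
      funext ω
      simp [hZ ω, h]
    have hvc : variance Z ℙ = 0 := by
      rw [hZc]
      have he : evariance (fun _ : Ω => c) ℙ = 0 := by
        rw [evariance_eq_zero_iff aemeasurable_const]
        have : (ℙ : Measure Ω)[fun _ : Ω => c] = c := by simp
        rw [this]
      simp [variance, he]
    rw [hvc] at hvar
    exact lt_irrefl 0 hvar
  obtain ⟨k0, l0, hk0l0⟩ := hΓne
  intro x
  set T : Finset (Fin M) := {k0}ᶜ with hT
  set W : Ω → (T → ℝ) := fun ω i => Y i ω with hWdef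
  have hW : Measurable W := measurable_pi_lambda _ (fun i => hYmeas i)
  have hindep : IndepFun W (Y k0) ℙ := by
    have h := (hYindep.indepFun_finset T {k0} disjoint_compl_left hYmeas).comp
      measurable_id
      (measurable_pi_apply (⟨k0, Finset.mem_singleton_self k0⟩ : ({k0} : Finset (Fin M))))
    exact h
  set A : ℝ := Γ k0 k0 with hA
  set B : (T → ℝ) → ℝ := fun w => ∑ i : T, (Γ k0 i + Γ i k0) * w i with hBdef
  set C : (T → ℝ) → ℝ := fun w => (∑ k : T, ∑ l : T, Γ k l * w k * w l) + (c - x) with hCdef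
  set F : (T → ℝ) → ℝ → ℝ := fun w t => A * t ^ 2 + B w * t + C w with hFdef
  have hBmeas : Measurable B :=
    Finset.measurable_sum Finset.univ (fun i _ => (measurable_pi_apply i).const_mul _)
  have hCmeas : Measurable C := by
    apply Measurable.add _ measurable_const
    refine Finset.measurable_sum Finset.univ (fun k _ => ?_)
    refine Finset.measurable_sum Finset.univ (fun l _ => ?_)
    exact ((measurable_pi_apply k).const_mul _).mul (measurable_pi_apply l)
  have hF : Measurable (Function.uncurry F) := by
    apply Measurable.add
    apply Measurable.add
    · exact ((measurable_snd.pow_const 2).const_mul _)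
    · exact (hBmeas.comp measurable_fst).mul measurable_snd
    · exact hCmeas.comp measurable_fst
  -- finiteness of slices, almost everywhere
  have hfin : ∀ᵐ w ∂(Measure.map W ℙ), {t : ℝ | F w t = 0}.Finite := by
    have hslice : ∀ w : T → ℝ, (A ≠ 0 ∨ B w ≠ 0) → {t : ℝ | F w t = 0}.Finite := by
      intro w hw
      set p : Polynomial ℝ :=
        Polynomial.C A * Polynomial.X ^ 2 + Polynomial.C (B w) * Polynomial.X
          + Polynomial.C (C w) with hp
      have hpne : p ≠ 0 := by
        intro h0
        rcases hw with hw | hw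
        · apply hw
          have := congrArg (fun q => Polynomial.coeff q 2) h0
          simpa [hp, Polynomial.coeff_C] using this
        · apply hw
          have := congrArg (fun q => Polynomial.coeff q 1) h0
          simpa [hp, Polynomial.coeff_C] using this
      have : {t : ℝ | F w t = 0} = {t : ℝ | p.IsRoot t} := by
        ext t
        simp [hp, Polynomial.IsRoot, hFdef]
      rw [this]
      exact Polynomial.finite_setOf_isRoot hpne
    by_cases hAne : A ≠ 0
    · exact Filter.Eventually.of_forall (fun w => hslice w (Or.inl hAne))
    · push_neg at hAne
      -- here the diagonal entry vanishes, so `l0 ≠ k0` and `B` is a nontrivial affine form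
      have hl0k0 : l0 ≠ k0 := by
        intro h
        apply hk0l0
        rw [h]
        rw [h] at hk0l0
        exact hAne
      have hl0T : l0 ∈ T := by
        rw [hT]
        simp [Finset.mem_compl, hl0k0]
      -- the coefficients of B as a full affine form
      set c' : Fin M → ℝ := fun l => if l = k0 then 0 else Γ k0 l + Γ l k0 with hc'def
      have hc'l0 : c' l0 ≠ 0 := by
        have hsymm : Γ l0 k0 = Γ k0 l0 := by
          have := hΓ
          rw [Matrix.IsSymm] at this
          calc Γ l0 k0 = Γ.transpose k0 l0 := rfl
          _ = Γ k0 l0 := by rw [this]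
        simp only [hc'def, if_neg hl0k0, hsymm]
        intro h
        apply hk0l0
        linarith
      have haff : ℙ {ω | ∑ l, c' l * Y l ω + 0 = 0} = 0 :=
        gqf_affine_null M Y hYmeas hYindep hYdist c' 0 l0 hc'l0
      have hBW : ∀ ω, B (W ω) = ∑ l, c' l * Y l ω + 0 := by
        intro ω
        have hcoe : B (W ω) = ∑ l ∈ T, (Γ k0 l + Γ l k0) * Y l ω := by
          rw [hBdef, hWdef]
          exact Finset.sum_coe_sort T (fun l => (Γ k0 l + Γ l k0) * Y l ω)
        have hsum : ∑ l, c' l * Y l ω = ∑ l ∈ T, (Γ k0 l + Γ l k0) * Y l ω := by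
          rw [← Finset.sum_compl_add_sum ({k0} : Finset (Fin M)) (fun l => c' l * Y l ω)]
          have h1 : ∑ l ∈ ({k0} : Finset (Fin M)), c' l * Y l ω = 0 := by
            simp [hc'def]
          have h2 : ∑ l ∈ ({k0}ᶜ : Finset (Fin M)), c' l * Y l ω
              = ∑ l ∈ T, (Γ k0 l + Γ l k0) * Y l ω := by
            refine Finset.sum_congr (by rw [hT]) (fun l hl => ?_)
            have hlk0 : l ≠ k0 := by
              intro h
              rw [hT] at hl
              simp [h] at hl
            simp [hc'def, if_neg hlk0]
          rw [h1, h2, add_zero]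
        rw [hcoe, ← hsum, add_zero]
      have hnull : (Measure.map W ℙ) {w | B w = 0} = 0 := by
        have hmeas : MeasurableSet {w : T → ℝ | B w = 0} := hBmeas (measurableSet_singleton 0)
        rw [Measure.map_apply hW hmeas]
        have : W ⁻¹' {w | B w = 0} = {ω | ∑ l, c' l * Y l ω + 0 = 0} := by
          ext ω
          simp only [Set.mem_preimage, Set.mem_setOf_eq, hBW ω]
        rw [this]
        exact haff
      have hae : ∀ᵐ w ∂(Measure.map W ℙ), B w ≠ 0 := by
        rw [ae_iff]
        simpa using hnull
      filter_upwards [hae] with w hw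
      exact hslice w (Or.inr hw)
  have hkey := gqf_master_null (Y k0) W (hYmeas k0) hW hindep (hYdist k0) F hF hfin
  have hsets : {ω | Z ω = x} = {ω | F (W ω) (Y k0 ω) = 0} := by
    ext ω
    simp only [Set.mem_setOf_eq]
    rw [hZ ω]
    have hsplit := gqf_quad_split M Γ k0 (fun k => Y k ω)
    have hBW : B (W ω) = ∑ l ∈ T, (Γ k0 l + Γ l k0) * Y l ω := by
      rw [hBdef, hWdef]
      exact Finset.sum_coe_sort T (fun l => (Γ k0 l + Γ l k0) * Y l ω)
    have hCW : C (W ω) = (∑ k ∈ T, ∑ l ∈ T, Γ k l * Y k ω * Y l ω) + (c - x) := by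
      simp only [hCdef, hWdef]
      congr 1
      rw [← Finset.sum_coe_sort T (fun k => ∑ l ∈ T, Γ k l * Y k ω * Y l ω)]
      refine Finset.sum_congr rfl (fun k _ => ?_)
      exact Finset.sum_coe_sort T (fun l => Γ (↑k) l * Y (↑k) ω * Y l ω)
    have hFval : F (W ω) (Y k0 ω)
        = (∑ k, ∑ l, Γ k l * Y k ω * Y l ω) + (c - x) := by
      rw [hFdef]
      simp only
      rw [hBW, hCW, hsplit, hT, hA]
      ring
    constructor
    · intro h
      rw [hFval]
      linarith
    · intro h
      rw [hFval] at h
      linarith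
  rw [hsets]
  exact hkey
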